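/- (Conical Alexander trick.) Let V be an arbitrary subset of the unit sphere S³ in ℝ⁴. The restriction-to-the-boundary map ∂ : Homeo_V(D⁴) → Homeo_V(S³), sending ψ to ψ|_{S³}, is a homotopy equivalence of topological spaces: there is a continuous map s : Homeo_V(S³) → Homeo_V(D⁴) with ∂ ∘ s equal to the identity and s ∘ ∂ homotopic to the identity of Homeo_V(D⁴). -/

import Mathlib

open Metric

noncomputable section

/-- Euclidean 4-space. -/
abbrev E4 : Type := EuclideanSpace ℝ (Fin 4)

/-- The closed unit ball `D⁴ ⊆ ℝ⁴`. -/
abbrev D4 : Set E4 := Metric.closedBall (0 : E4) 1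

/-- The unit sphere `S³ ⊆ ℝ⁴`, the boundary of `D⁴`. -/
abbrev S3 : Set E4 := Metric.sphere (0 : E4) 1

/-- The compact-open topology on self-homeomorphisms of a space, induced from the
compact-open topology on continuous self-maps. -/
instance homeoSelfTopology (α : Type*) [TopologicalSpace α] : TopologicalSpace (α ≃ₜ α) :=
  TopologicalSpace.induced (fun φ => (⟨φ, φ.continuous⟩ : C(α, α))) inferInstance

/-- `Homeo_V(S³)`: self-homeomorphisms of the sphere `S³` fixing `V` pointwise,
topologised as a subspace of the space of continuous self-maps (compact-open topology). -/
def HomeoVS (V : Set E4) : Type :=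
  {φ : S3 ≃ₜ S3 // ∀ v : S3, (v : E4) ∈ V → φ v = v}

/-- `Homeo_V(D⁴)`: self-homeomorphisms of the ball `D⁴` fixing `V` pointwise and mapping the
boundary sphere `S³` onto itself, topologised as a subspace of the space of continuous
self-maps (compact-open topology). -/
def HomeoVD (V : Set E4) : Type :=
  {ψ : D4 ≃ₜ D4 // (∀ v : D4, (v : E4) ∈ V → ψ v = v) ∧
    (fun x => ψ x) '' {x : D4 | (x : E4) ∈ S3} = {x : D4 | (x : E4) ∈ S3}}

instance (V : Set E4) : TopologicalSpace (HomeoVS V) :=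
  instTopologicalSpaceSubtype

instance (V : Set E4) : TopologicalSpace (HomeoVD V) :=
  instTopologicalSpaceSubtype

namespace HomeoRestriction

variable {ψ : D4 ≃ₜ D4}

lemma mem_sphere_image
    (h : (fun x => ψ x) '' {x : D4 | (x : E4) ∈ S3} = {x : D4 | (x : E4) ∈ S3})
    {x : D4} (hx : (x : E4) ∈ S3) : ((ψ x : D4) : E4) ∈ S3 := by
  have : ψ x ∈ {x : D4 | (x : E4) ∈ S3} := by
    rw [← h]; exact Set.mem_image_of_mem _ hx
  exact this

lemma mem_sphere_symm
    (h : (fun x => ψ x) '' {x : D4 | (x : E4) ∈ S3} = {x : D4 | (x : E4) ∈ S3})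
    {y : D4} (hy : (y : E4) ∈ S3) : ((ψ.symm y : D4) : E4) ∈ S3 := by
  have : y ∈ (fun x => ψ x) '' {x : D4 | (x : E4) ∈ S3} := by rw [h]; exact hy
  obtain ⟨x, hx, hxy⟩ := this
  have hs : ψ.symm y = x := by rw [← hxy]; exact ψ.symm_apply_apply x
  rw [hs]; exact hx

/-- The restriction of a boundary-sphere-preserving self-homeomorphism of `D⁴` to a
self-homeomorphism of `S³`. -/
def restrictHomeo (ψ : D4 ≃ₜ D4)
    (h : (fun x => ψ x) '' {x : D4 | (x : E4) ∈ S3} = {x : D4 | (x : E4) ∈ S3}) :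
    S3 ≃ₜ S3 where
  toFun a := ⟨((ψ ⟨(a : E4), Metric.sphere_subset_closedBall a.2⟩ : D4) : E4),
    mem_sphere_image h a.2⟩
  invFun a := ⟨((ψ.symm ⟨(a : E4), Metric.sphere_subset_closedBall a.2⟩ : D4) : E4),
    mem_sphere_symm h a.2⟩
  left_inv a := by
    apply Subtype.ext
    have : (⟨((ψ ⟨(a : E4), Metric.sphere_subset_closedBall a.2⟩ : D4) : E4),
        Metric.sphere_subset_closedBall (mem_sphere_image h a.2)⟩ : D4)
        = ψ ⟨(a : E4), Metric.sphere_subset_closedBall a.2⟩ := by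
      apply Subtype.ext; rfl
    simp only [this, Homeomorph.symm_apply_apply]
  right_inv a := by
    apply Subtype.ext
    have : (⟨((ψ.symm ⟨(a : E4), Metric.sphere_subset_closedBall a.2⟩ : D4) : E4),
        Metric.sphere_subset_closedBall (mem_sphere_symm h a.2)⟩ : D4)
        = ψ.symm ⟨(a : E4), Metric.sphere_subset_closedBall a.2⟩ := by
      apply Subtype.ext; rfl
    simp only [this, Homeomorph.apply_symm_apply]
  continuous_toFun := by
    apply Continuous.subtype_mk
    exact continuous_subtype_val.comp (ψ.continuous.comp
      (Continuous.subtype_mk continuous_subtype_val _))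
  continuous_invFun := by
    apply Continuous.subtype_mk
    exact continuous_subtype_val.comp (ψ.symm.continuous.comp
      (Continuous.subtype_mk continuous_subtype_val _))

end HomeoRestriction

/-- The boundary restriction map `∂ : Homeo_V(D⁴) → Homeo_V(S³)`. -/
def bres (V : Set E4) (Ψ : HomeoVD V) : HomeoVS V :=
  ⟨HomeoRestriction.restrictHomeo Ψ.1 Ψ.2.2, by
    intro v hv
    apply Subtype.ext
    show ((Ψ.1 ⟨(v : E4), Metric.sphere_subset_closedBall v.2⟩ : D4) : E4) = (v : E4)
    have := Ψ.2.1 ⟨(v : E4), Metric.sphere_subset_closedBall v.2⟩ hv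
    rw [this]⟩


/-!
STATEMENT 3 (Conical Alexander trick): the boundary restriction map
`∂ : Homeo_V(D⁴) → Homeo_V(S³)` is a homotopy equivalence: it is continuous, and there is a
continuous `s : Homeo_V(S³) → Homeo_V(D⁴)` with `∂ ∘ s = id` and `s ∘ ∂` homotopic to the
identity of `Homeo_V(D⁴)`.
-/
namespace AT

open unitInterval Topology

instance : CompactSpace D4 := isCompact_iff_compactSpace.mp (isCompact_closedBall 0 1)
instance : CompactSpace S3 := isCompact_iff_compactSpace.mp (isCompact_sphere 0 1)
example : LocallyCompactSpace D4 := inferInstance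

lemma normD {x : D4} : ‖(x : E4)‖ ≤ 1 := mem_closedBall_zero_iff.mp x.2
lemma normS {x : S3} : ‖(x : E4)‖ = 1 := mem_sphere_zero_iff_norm.mp x.2

def sval (a : S3) : D4 := ⟨a, sphere_subset_closedBall a.2⟩

def toCD (ψ : D4 ≃ₜ D4) : C(D4, D4) := ⟨ψ, ψ.continuous⟩
def toCS (φ : S3 ≃ₜ S3) : C(S3, S3) := ⟨φ, φ.continuous⟩

/- ### unitize -/

open scoped Classical in
def unitize (x : D4) : S3 :=
  if h : (x : E4) = 0 then ⟨EuclideanSpace.single 0 1, by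
    simp [mem_sphere_zero_iff_norm, EuclideanSpace.norm_single]⟩
  else ⟨‖(x : E4)‖⁻¹ • (x : E4), by
    rw [mem_sphere_zero_iff_norm, norm_smul, norm_inv, norm_norm,
      inv_mul_cancel₀ (norm_ne_zero_iff.2 h)]⟩

lemma unitize_of_ne {x : D4} (h : (x : E4) ≠ 0) :
    (unitize x : E4) = ‖(x : E4)‖⁻¹ • (x : E4) := by
  simp [unitize, h]

/- ### coneFun -/

def coneFun (f : C(S3, S3)) (x : D4) : D4 :=
  ⟨‖(x : E4)‖ • ((f (unitize x) : S3) : E4), by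
    rw [mem_closedBall_zero_iff, norm_smul, norm_norm, normS, mul_one]
    exact normD⟩

lemma coneFun_zero (f : C(S3, S3)) {x : D4} (h : (x : E4) = 0) :
    ((coneFun f x : D4) : E4) = 0 := by
  simp [coneFun, h]

lemma coneFun_boundary (f : C(S3, S3)) (a : S3) :
    coneFun f (sval a) = sval (f a) := by
  have h0 : ((sval a : D4) : E4) ≠ 0 := by
    rw [show ((sval a : D4) : E4) = (a : E4) from rfl]
    intro h; have := normS (x := a); rw [h] at this; simpa using this
  have hu : unitize (sval a) = a := by
    apply Subtype.ext
    rw [unitize_of_ne h0]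
    show ‖(a : E4)‖⁻¹ • (a : E4) = (a : E4)
    rw [normS, inv_one, one_smul]
  apply Subtype.ext
  show ‖((sval a : D4) : E4)‖ • ((f (unitize (sval a)) : S3) : E4) = _
  rw [hu]
  show ‖(a : E4)‖ • ((f a : S3) : E4) = (f a : E4)
  rw [normS, one_smul]

lemma coneFun_comp (φ : S3 ≃ₜ S3) (x : D4) :
    coneFun (toCS φ.symm) (coneFun (toCS φ) x) = x := by
  by_cases h : (x : E4) = 0
  · apply Subtype.ext
    rw [coneFun_zero _ (coneFun_zero _ h), h]
  · set y := coneFun (toCS φ) x with hy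
    have hyv : (y : E4) = ‖(x : E4)‖ • ((φ (unitize x) : S3) : E4) := rfl
    have hny : ‖(y : E4)‖ = ‖(x : E4)‖ := by
      rw [hyv, norm_smul, norm_norm, normS, mul_one]
    have hy0 : (y : E4) ≠ 0 := by
      rw [← norm_ne_zero_iff, hny]; exact norm_ne_zero_iff.2 h
    have huy : unitize y = φ (unitize x) := by
      apply Subtype.ext
      rw [unitize_of_ne hy0]
      show ‖(y : E4)‖⁻¹ • (y : E4) = _
      rw [hny, hyv, smul_smul, inv_mul_cancel₀ (norm_ne_zero_iff.2 h), one_smul]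
    apply Subtype.ext
    show ‖(y : E4)‖ • ((φ.symm (unitize y) : S3) : E4) = (x : E4)
    rw [huy, φ.symm_apply_apply, hny, unitize_of_ne h, smul_smul,
      mul_inv_cancel₀ (norm_ne_zero_iff.2 h), one_smul]

/- ### continuity of coneFun -/

lemma continuousAt_unitize {x₀ : D4} (h : (x₀ : E4) ≠ 0) : ContinuousAt unitize x₀ := by
  rw [(IsInducing.subtypeVal (t := S3)).continuousAt_iff]
  have hopen : IsOpen {x : D4 | (x : E4) ≠ 0} :=
    isOpen_induced (isOpen_compl_singleton)
  have hev : (fun x : D4 => ‖(x : E4)‖⁻¹ • (x : E4)) =ᶠ[nhds x₀]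
      (fun x : D4 => ((unitize x : S3) : E4)) := by
    filter_upwards [hopen.mem_nhds h] with x hx
    exact (unitize_of_ne hx).symm
  refine ContinuousAt.congr ?_ hev
  exact ((continuous_subtype_val.norm.continuousAt).inv₀
    (norm_ne_zero_iff.2 h)).smul continuous_subtype_val.continuousAt

lemma continuous_coneFun : Continuous fun p : C(S3, S3) × D4 => coneFun p.1 p.2 := by
  apply Continuous.subtype_mk
  rw [continuous_iff_continuousAt]
  intro p₀
  by_cases h : (p₀.2 : E4) = 0
  · have hval : ‖((p₀.2 : D4) : E4)‖ • ((p₀.1 (unitize p₀.2) : S3) : E4) = 0 := by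
      rw [h]; simp
    show Filter.Tendsto _ (nhds p₀)
      (nhds (‖((p₀.2 : D4) : E4)‖ • ((p₀.1 (unitize p₀.2) : S3) : E4)))
    rw [hval]
    apply squeeze_zero_norm (a := fun p : C(S3, S3) × D4 => ‖(p.2 : E4)‖)
    · intro p
      rw [norm_smul, norm_norm, normS, mul_one]
    · have : Filter.Tendsto (fun p : C(S3, S3) × D4 => ‖(p.2 : E4)‖)
          (nhds p₀) (nhds ‖(p₀.2 : E4)‖) :=
        ((continuous_subtype_val.norm).comp continuous_snd).continuousAt
      rwa [h, norm_zero] at this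
  · have h1 : ContinuousAt (fun p : C(S3, S3) × D4 => (p.1, unitize p.2)) p₀ :=
      continuous_fst.continuousAt.prodMk ((continuousAt_unitize h).comp
        continuous_snd.continuousAt)
    have h2 : ContinuousAt (fun p : C(S3, S3) × D4 => p.1 (unitize p.2)) p₀ :=
      ContinuousEval.continuous_eval.continuousAt.comp h1
    have h3 : ContinuousAt (fun p : C(S3, S3) × D4 => ((p.1 (unitize p.2) : S3) : E4)) p₀ :=
      continuous_subtype_val.continuousAt.comp h2
    exact ((continuous_subtype_val.norm.comp continuous_snd).continuousAt).smul h3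


/- ### aFun -/

def rr (t : I) (x : D4) : ℝ := max (t : ℝ) ‖(x : E4)‖

lemma rr_nonneg (t : I) (x : D4) : 0 ≤ rr t x :=
  le_trans (norm_nonneg _) (le_max_right _ _)

lemma rr_le_one (t : I) (x : D4) : rr t x ≤ 1 := max_le t.2.2 normD

lemma norm_le_rr (t : I) (x : D4) : ‖(x : E4)‖ ≤ rr t x := le_max_right _ _

lemma rr_mem (t : I) (x : D4) : (rr t x)⁻¹ • (x : E4) ∈ D4 := by
  rw [mem_closedBall_zero_iff, norm_smul, norm_inv, Real.norm_eq_abs,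
    abs_of_nonneg (rr_nonneg t x)]
  rcases eq_or_lt_of_le (rr_nonneg t x) with h | h
  · have hx : ‖(x : E4)‖ = 0 := le_antisymm (h ▸ norm_le_rr t x) (norm_nonneg _)
    rw [hx, mul_zero]; norm_num
  · rw [inv_mul_le_iff₀ h, mul_one]; exact norm_le_rr t x

def aFun (t : I) (f : C(D4, D4)) (x : D4) : D4 :=
  ⟨(rr t x) • ((f ⟨(rr t x)⁻¹ • (x : E4), rr_mem t x⟩ : D4) : E4), by
    rw [mem_closedBall_zero_iff, norm_smul, Real.norm_eq_abs, abs_of_nonneg (rr_nonneg t x)]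
    calc rr t x * ‖((f ⟨(rr t x)⁻¹ • (x : E4), rr_mem t x⟩ : D4) : E4)‖
        ≤ rr t x * 1 := by
          exact mul_le_mul_of_nonneg_left normD (rr_nonneg t x)
      _ ≤ 1 := by rw [mul_one]; exact rr_le_one t x⟩

lemma aFun_val (t : I) (f : C(D4, D4)) (x : D4) :
    ((aFun t f x : D4) : E4)
      = (rr t x) • ((f ⟨(rr t x)⁻¹ • (x : E4), rr_mem t x⟩ : D4) : E4) := rfl

lemma aFun_of_rr_one (t : I) (f : C(D4, D4)) (x : D4) (h : rr t x = 1) :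
    aFun t f x = f x := by
  apply Subtype.ext
  rw [aFun_val]
  have : (⟨(rr t x)⁻¹ • (x : E4), rr_mem t x⟩ : D4) = x := by
    apply Subtype.ext
    show (rr t x)⁻¹ • (x : E4) = (x : E4)
    rw [h, inv_one, one_smul]
  rw [this, h, one_smul]

lemma aFun_boundary (t : I) (f : C(D4, D4)) (x : D4) (hx : ‖(x : E4)‖ = 1) :
    aFun t f x = f x :=
  aFun_of_rr_one t f x (by rw [rr, hx]; exact max_eq_right t.2.2)

lemma aFun_one (f : C(D4, D4)) (x : D4) : aFun 1 f x = f x :=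
  aFun_of_rr_one 1 f x (by rw [rr]; exact max_eq_left normD)

/-- The sphere-preservation condition. -/
def SC (ψ : D4 ≃ₜ D4) : Prop :=
  (fun x => ψ x) '' {x : D4 | (x : E4) ∈ S3} = {x : D4 | (x : E4) ∈ S3}

lemma SC_symm {ψ : D4 ≃ₜ D4} (h : SC ψ) : SC ψ.symm := by
  ext y
  constructor
  · rintro ⟨x, hx, rfl⟩
    exact HomeoRestriction.mem_sphere_symm h hx
  · intro hy
    exact ⟨ψ y, HomeoRestriction.mem_sphere_image h hy, ψ.symm_apply_apply y⟩

lemma aFun_val' (t : I) (f : C(D4, D4)) (x : D4) (r : ℝ) (hr : rr t x = r)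
    (m : r⁻¹ • (x : E4) ∈ D4) :
    ((aFun t f x : D4) : E4) = r • ((f ⟨r⁻¹ • (x : E4), m⟩ : D4) : E4) := by
  subst hr; rfl

lemma aFun_comp (t : I) (ψ : D4 ≃ₜ D4) (hs : SC ψ) (x : D4) :
    aFun t (toCD ψ.symm) (aFun t (toCD ψ) x) = x := by
  set y := aFun t (toCD ψ) x with hy
  by_cases h0 : rr t x = 0
  · have ht : (t : ℝ) = 0 := le_antisymm (h0 ▸ le_max_left _ _) t.2.1
    have hx : ‖(x : E4)‖ = 0 := le_antisymm (h0 ▸ norm_le_rr t x) (norm_nonneg _)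
    have m0 : (0 : ℝ)⁻¹ • (x : E4) ∈ D4 := by
      rw [inv_zero, zero_smul]; simp
    have hyv : (y : E4) = 0 := by
      rw [hy, aFun_val' t _ x 0 h0 m0, zero_smul]
    have hry : rr t y = 0 := by rw [rr, ht, hyv, norm_zero, max_self]
    have m0' : (0 : ℝ)⁻¹ • (y : E4) ∈ D4 := by
      rw [inv_zero, zero_smul]; simp
    apply Subtype.ext
    rw [aFun_val' t _ y 0 hry m0', zero_smul, ← norm_eq_zero.mp hx]
  · by_cases hc : ‖(x : E4)‖ ≤ (t : ℝ)
    · -- case ‖x‖ ≤ t, t > 0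
      have hr : rr t x = (t : ℝ) := max_eq_left hc
      have ht0 : (0 : ℝ) < t := by
        rcases lt_or_eq_of_le t.2.1 with h | h
        · exact h
        · exact absurd (by rw [hr, ← h]) h0
      have mx : ((t : ℝ))⁻¹ • (x : E4) ∈ D4 := hr ▸ rr_mem t x
      have hyv : (y : E4) = (t : ℝ) • ((ψ ⟨(t : ℝ)⁻¹ • (x : E4), mx⟩ : D4) : E4) := by
        rw [hy, aFun_val' t _ x t hr mx]; rfl
      have hny : ‖(y : E4)‖ ≤ (t : ℝ) := by
        rw [hyv, norm_smul, Real.norm_eq_abs, abs_of_nonneg t.2.1]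
        calc (t : ℝ) * ‖((ψ ⟨(t : ℝ)⁻¹ • (x : E4), mx⟩ : D4) : E4)‖
            ≤ (t : ℝ) * 1 := mul_le_mul_of_nonneg_left normD t.2.1
          _ = t := mul_one _
      have hry : rr t y = (t : ℝ) := max_eq_left hny
      have my : ((t : ℝ))⁻¹ • (y : E4) ∈ D4 := hry ▸ rr_mem t y
      apply Subtype.ext
      rw [aFun_val' t _ y t hry my]
      have harg : (⟨(t : ℝ)⁻¹ • (y : E4), my⟩ : D4) = ψ ⟨(t : ℝ)⁻¹ • (x : E4), mx⟩ := by
        apply Subtype.ext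
        show (t : ℝ)⁻¹ • (y : E4) = _
        rw [hyv, smul_smul, inv_mul_cancel₀ (ne_of_gt ht0), one_smul]
      rw [harg]
      show (t : ℝ) • ((ψ.symm (ψ ⟨(t : ℝ)⁻¹ • (x : E4), mx⟩) : D4) : E4) = (x : E4)
      rw [ψ.symm_apply_apply]
      show (t : ℝ) • ((t : ℝ)⁻¹ • (x : E4)) = (x : E4)
      rw [smul_smul, mul_inv_cancel₀ (ne_of_gt ht0), one_smul]
    · -- case ‖x‖ > t
      push_neg at hc
      have hnx : rr t x = ‖(x : E4)‖ := max_eq_right (le_of_lt hc)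
      have hx0 : (0 : ℝ) < ‖(x : E4)‖ := lt_of_le_of_lt t.2.1 hc
      have mx : (‖(x : E4)‖)⁻¹ • (x : E4) ∈ D4 := hnx ▸ rr_mem t x
      set u : D4 := ⟨(‖(x : E4)‖)⁻¹ • (x : E4), mx⟩ with hu
      have hus : (u : E4) ∈ S3 := by
        rw [mem_sphere_zero_iff_norm]
        show ‖(‖(x : E4)‖)⁻¹ • (x : E4)‖ = 1
        rw [norm_smul, norm_inv, norm_norm, inv_mul_cancel₀ (ne_of_gt hx0)]
      have hψu : ((ψ u : D4) : E4) ∈ S3 := HomeoRestriction.mem_sphere_image hs hus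
      have hyv : (y : E4) = ‖(x : E4)‖ • ((ψ u : D4) : E4) := by
        rw [hy, aFun_val' t _ x ‖(x : E4)‖ hnx mx]; rfl
      have hny : ‖(y : E4)‖ = ‖(x : E4)‖ := by
        rw [hyv, norm_smul, norm_norm, mem_sphere_zero_iff_norm.mp hψu, mul_one]
      have hry : rr t y = ‖(x : E4)‖ := by
        rw [rr, hny]; exact max_eq_right (le_of_lt hc)
      have my : (‖(x : E4)‖)⁻¹ • (y : E4) ∈ D4 := hry ▸ rr_mem t y
      apply Subtype.ext
      rw [aFun_val' t _ y ‖(x : E4)‖ hry my]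
      have harg : (⟨(‖(x : E4)‖)⁻¹ • (y : E4), my⟩ : D4) = ψ u := by
        apply Subtype.ext
        show (‖(x : E4)‖)⁻¹ • (y : E4) = _
        rw [hyv, smul_smul, inv_mul_cancel₀ (ne_of_gt hx0), one_smul]
      rw [harg]
      show ‖(x : E4)‖ • ((ψ.symm (ψ u) : D4) : E4) = (x : E4)
      rw [ψ.symm_apply_apply, hu]
      show ‖(x : E4)‖ • ((‖(x : E4)‖)⁻¹ • (x : E4)) = (x : E4)
      rw [smul_smul, mul_inv_cancel₀ (ne_of_gt hx0), one_smul]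

/- ### continuity of aFun -/

lemma continuous_rr : Continuous fun p : (I × C(D4, D4)) × D4 => rr p.1.1 p.2 :=
  ((continuous_subtype_val.comp (continuous_fst.comp continuous_fst)).max
    (continuous_subtype_val.norm.comp continuous_snd))

lemma continuous_aFun :
    Continuous fun p : (I × C(D4, D4)) × D4 => aFun p.1.1 p.1.2 p.2 := by
  apply Continuous.subtype_mk
  rw [continuous_iff_continuousAt]
  intro p₀
  by_cases h : rr p₀.1.1 p₀.2 = 0
  · have hval : (rr p₀.1.1 p₀.2) •
        ((p₀.1.2 ⟨(rr p₀.1.1 p₀.2)⁻¹ • (p₀.2 : E4), rr_mem _ _⟩ : D4) : E4) = 0 :=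
      smul_eq_zero_of_left h _
    show Filter.Tendsto _ (nhds p₀) (nhds ((rr p₀.1.1 p₀.2) •
        ((p₀.1.2 ⟨(rr p₀.1.1 p₀.2)⁻¹ • (p₀.2 : E4), rr_mem _ _⟩ : D4) : E4)))
    rw [hval]
    apply squeeze_zero_norm (a := fun p : (I × C(D4, D4)) × D4 => rr p.1.1 p.2)
    · intro p
      rw [norm_smul, Real.norm_eq_abs, abs_of_nonneg (rr_nonneg _ _)]
      calc rr p.1.1 p.2 * ‖_‖ ≤ rr p.1.1 p.2 * 1 :=
            mul_le_mul_of_nonneg_left normD (rr_nonneg _ _)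
        _ = rr p.1.1 p.2 := mul_one _
    · have := continuous_rr.continuousAt (x := p₀)
      simpa [ContinuousAt, h] using this
  · have hinner : ContinuousAt
        (fun p : (I × C(D4, D4)) × D4 =>
          (⟨(rr p.1.1 p.2)⁻¹ • (p.2 : E4), rr_mem p.1.1 p.2⟩ : D4)) p₀ := by
      rw [(IsInducing.subtypeVal (t := D4)).continuousAt_iff]
      exact ((continuous_rr.continuousAt).inv₀ h).smul
        (continuous_subtype_val.comp continuous_snd).continuousAt
    have h2 : ContinuousAt (fun p : (I × C(D4, D4)) × D4 =>
        p.1.2 (⟨(rr p.1.1 p.2)⁻¹ • (p.2 : E4), rr_mem p.1.1 p.2⟩ : D4)) p₀ :=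
      ContinuousEval.continuous_eval.continuousAt.comp
        ((continuous_snd.comp continuous_fst).continuousAt.prodMk hinner)
    have h3 : ContinuousAt (fun p : (I × C(D4, D4)) × D4 =>
        ((p.1.2 (⟨(rr p.1.1 p.2)⁻¹ • (p.2 : E4), rr_mem p.1.1 p.2⟩ : D4) : D4) : E4)) p₀ :=
      continuous_subtype_val.continuousAt.comp h2
    exact (continuous_rr.continuousAt).smul h3

/- ### the homeomorphisms -/

lemma continuous_coneFun_right (f : C(S3, S3)) : Continuous fun x : D4 => coneFun f x := by
  have h : Continuous fun x : D4 => ((f, x) : C(S3, S3) × D4) :=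
    continuous_const.prodMk continuous_id
  have h2 := continuous_coneFun.comp h
  exact h2

lemma continuous_aFun_right (t : I) (f : C(D4, D4)) :
    Continuous fun x : D4 => aFun t f x := by
  have h : Continuous fun x : D4 => (((t, f), x) : (I × C(D4, D4)) × D4) :=
    (continuous_const.prodMk continuous_const).prodMk continuous_id
  have h2 := continuous_aFun.comp h
  exact h2

def coneHomeo (φ : S3 ≃ₜ S3) : D4 ≃ₜ D4 where
  toFun := coneFun (toCS φ)
  invFun := coneFun (toCS φ.symm)
  left_inv x := coneFun_comp φ x
  right_inv x := by
    have := coneFun_comp φ.symm x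
    rwa [Homeomorph.symm_symm] at this
  continuous_toFun := continuous_coneFun_right (toCS φ)
  continuous_invFun := continuous_coneFun_right (toCS φ.symm)

def aHomeo (t : I) (ψ : D4 ≃ₜ D4) (hs : SC ψ) : D4 ≃ₜ D4 where
  toFun := aFun t (toCD ψ)
  invFun := aFun t (toCD ψ.symm)
  left_inv x := aFun_comp t ψ hs x
  right_inv x := by
    have := aFun_comp t ψ.symm (SC_symm hs) x
    rwa [Homeomorph.symm_symm] at this
  continuous_toFun := continuous_aFun_right t (toCD ψ)
  continuous_invFun := continuous_aFun_right t (toCD ψ.symm)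

lemma SC_of (χ : D4 ≃ₜ D4) (h1 : ∀ x : D4, (x : E4) ∈ S3 → ((χ x : D4) : E4) ∈ S3)
    (h2 : ∀ x : D4, (x : E4) ∈ S3 → ((χ.symm x : D4) : E4) ∈ S3) : SC χ := by
  ext y
  constructor
  · rintro ⟨x, hx, rfl⟩
    exact h1 x hx
  · intro hy
    exact ⟨χ.symm y, h2 y hy, χ.apply_symm_apply y⟩

lemma SC_coneHomeo (φ : S3 ≃ₜ S3) : SC (coneHomeo φ) := by
  apply SC_of
  · intro x hx
    show ((coneFun (toCS φ) x : D4) : E4) ∈ S3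
    have : x = sval ⟨(x : E4), hx⟩ := Subtype.ext rfl
    rw [this, coneFun_boundary]
    exact (toCS φ ⟨(x : E4), hx⟩).2
  · intro x hx
    show ((coneFun (toCS φ.symm) x : D4) : E4) ∈ S3
    have : x = sval ⟨(x : E4), hx⟩ := Subtype.ext rfl
    rw [this, coneFun_boundary]
    exact (toCS φ.symm ⟨(x : E4), hx⟩).2

lemma SC_aHomeo (t : I) (ψ : D4 ≃ₜ D4) (hs : SC ψ) : SC (aHomeo t ψ hs) := by
  apply SC_of
  · intro x hx
    show ((aFun t (toCD ψ) x : D4) : E4) ∈ S3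
    rw [aFun_boundary t _ x (mem_sphere_zero_iff_norm.mp hx)]
    exact HomeoRestriction.mem_sphere_image hs hx
  · intro x hx
    show ((aFun t (toCD ψ.symm) x : D4) : E4) ∈ S3
    rw [aFun_boundary t _ x (mem_sphere_zero_iff_norm.mp hx)]
    exact HomeoRestriction.mem_sphere_image (SC_symm hs) hx

/- ### relation between aFun at 0/1 and cone -/

lemma aFun_zero_eq (ψ : D4 ≃ₜ D4) (hs : SC ψ) (x : D4) :
    aFun 0 (toCD ψ) x = coneFun (toCS (HomeoRestriction.restrictHomeo ψ hs)) x := by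
  by_cases h : (x : E4) = 0
  · have hr : rr 0 x = 0 := by
      rw [rr, h]
      simp
    have m0 : (0 : ℝ)⁻¹ • (x : E4) ∈ D4 := by rw [inv_zero, zero_smul]; simp
    apply Subtype.ext
    rw [aFun_val' 0 _ x 0 hr m0, zero_smul, coneFun_zero _ h]
  · have hn0 : ‖(x : E4)‖ ≠ 0 := norm_ne_zero_iff.2 h
    have hr : rr 0 x = ‖(x : E4)‖ := by
      rw [rr]
      exact max_eq_right (by push_cast; exact norm_nonneg _)
    have mx : (‖(x : E4)‖)⁻¹ • (x : E4) ∈ D4 := hr ▸ rr_mem 0 x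
    have harg : sval (unitize x) = (⟨(‖(x : E4)‖)⁻¹ • (x : E4), mx⟩ : D4) := by
      apply Subtype.ext
      show ((unitize x : S3) : E4) = _
      rw [unitize_of_ne h]
    apply Subtype.ext
    rw [aFun_val' 0 _ x ‖(x : E4)‖ hr mx]
    show _ = ‖(x : E4)‖ • ((HomeoRestriction.restrictHomeo ψ hs (unitize x) : S3) : E4)
    have hres : ((HomeoRestriction.restrictHomeo ψ hs (unitize x) : S3) : E4)
        = ((ψ (sval (unitize x)) : D4) : E4) := rfl
    rw [hres, harg]
    rfl

/- ### the maps s and H -/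

variable {V : Set E4}

def sMap (V : Set E4) (hV : V ⊆ S3) (φ : HomeoVS V) : HomeoVD V :=
  ⟨coneHomeo φ.1, by
    constructor
    · intro v hv
      have hv3 : (v : E4) ∈ S3 := hV hv
      have hsv : v = sval ⟨(v : E4), hv3⟩ := Subtype.ext rfl
      show coneFun (toCS φ.1) v = v
      rw [hsv, coneFun_boundary]
      show sval (φ.1 ⟨(v : E4), hv3⟩) = sval ⟨(v : E4), hv3⟩
      rw [φ.2 ⟨(v : E4), hv3⟩ hv]
    · exact SC_coneHomeo φ.1⟩

def hMap (V : Set E4) (hV : V ⊆ S3) (p : I × HomeoVD V) : HomeoVD V :=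
  ⟨aHomeo p.1 p.2.1 p.2.2.2, by
    constructor
    · intro v hv
      have hv3 : (v : E4) ∈ S3 := hV hv
      show aFun p.1 (toCD p.2.1) v = v
      rw [aFun_boundary _ _ v (mem_sphere_zero_iff_norm.mp hv3)]
      exact p.2.2.1 v hv
    · exact SC_aHomeo p.1 p.2.1 p.2.2.2⟩

/- ### continuity of the assembled maps -/

lemma continuous_sval : Continuous sval :=
  Continuous.subtype_mk continuous_subtype_val _

lemma continuous_iotaD : Continuous fun Ψ : HomeoVD V => toCD Ψ.1 := by
  have h := (continuous_induced_dom
    (f := fun φ : D4 ≃ₜ D4 => (⟨φ, φ.continuous⟩ : C(D4, D4)))).comp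
    (continuous_subtype_val (p := fun ψ : D4 ≃ₜ D4 =>
      (∀ v : D4, (v : E4) ∈ V → ψ v = v) ∧
      (fun x => ψ x) '' {x : D4 | (x : E4) ∈ S3} = {x : D4 | (x : E4) ∈ S3}))
  exact h

lemma continuous_iotaS : Continuous fun φ : HomeoVS V => toCS φ.1 := by
  have h := (continuous_induced_dom
    (f := fun φ : S3 ≃ₜ S3 => (⟨φ, φ.continuous⟩ : C(S3, S3)))).comp
    (continuous_subtype_val (p := fun φ : S3 ≃ₜ S3 => ∀ v : S3, (v : E4) ∈ V → φ v = v))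
  exact h

lemma continuous_bres : Continuous (bres V) := by
  apply Continuous.subtype_mk
  apply continuous_induced_rng.2
  apply ContinuousMap.continuous_of_continuous_uncurry
  have key : Continuous fun p : HomeoVD V × S3 =>
      (⟨((p.1.1 (sval p.2) : D4) : E4),
        HomeoRestriction.mem_sphere_image p.1.2.2 p.2.2⟩ : S3) := by
    apply Continuous.subtype_mk
    have e1 : Continuous fun p : HomeoVD V × S3 => ((toCD p.1.1, sval p.2) : C(D4, D4) × D4) :=
      (continuous_iotaD.comp continuous_fst).prodMk (continuous_sval.comp continuous_snd)
    have e2 := ContinuousEval.continuous_eval.comp e1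
    have e3 := continuous_subtype_val.comp e2
    exact e3
  exact key.congr fun p => rfl

lemma continuous_sMap (hV : V ⊆ S3) : Continuous (sMap V hV) := by
  apply Continuous.subtype_mk
  apply continuous_induced_rng.2
  apply ContinuousMap.continuous_of_continuous_uncurry
  have key : Continuous fun p : HomeoVS V × D4 => coneFun (toCS p.1.1) p.2 := by
    have e1 : Continuous fun p : HomeoVS V × D4 => ((toCS p.1.1, p.2) : C(S3, S3) × D4) :=
      (continuous_iotaS.comp continuous_fst).prodMk continuous_snd
    have e2 := continuous_coneFun.comp e1
    exact e2
  exact key.congr fun p => rfl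

lemma continuous_hMap (hV : V ⊆ S3) : Continuous (hMap V hV) := by
  apply Continuous.subtype_mk
  apply continuous_induced_rng.2
  apply ContinuousMap.continuous_of_continuous_uncurry
  have key : Continuous fun p : (I × HomeoVD V) × D4 => aFun p.1.1 (toCD p.1.2.1) p.2 := by
    have e1 : Continuous fun p : (I × HomeoVD V) × D4 =>
        (((p.1.1, toCD p.1.2.1), p.2) : (I × C(D4, D4)) × D4) :=
      ((continuous_fst.comp continuous_fst).prodMk
        (continuous_iotaD.comp (continuous_snd.comp continuous_fst))).prodMk continuous_snd
    have e2 := continuous_aFun.comp e1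
    exact e2
  exact key.congr fun p => rfl

end AT

theorem conical_alexander_trick (V : Set E4) (hV : V ⊆ S3) :
    ∃ bd : C(HomeoVD V, HomeoVS V),
      (∀ Ψ : HomeoVD V, bd Ψ = bres V Ψ) ∧
      ∃ s : C(HomeoVS V, HomeoVD V),
        bd.comp s = ContinuousMap.id (HomeoVS V) ∧
        (s.comp bd).Homotopic (ContinuousMap.id (HomeoVD V)) := by
  refine ⟨⟨bres V, AT.continuous_bres⟩, fun Ψ => rfl,
    ⟨AT.sMap V hV, AT.continuous_sMap hV⟩, ?_, ?_⟩
  · apply ContinuousMap.ext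
    intro φ
    apply Subtype.ext
    apply Homeomorph.ext
    intro a
    apply Subtype.ext
    show ((AT.coneHomeo φ.1 (AT.sval a) : D4) : E4) = ((φ.1 a : S3) : E4)
    show ((AT.coneFun (AT.toCS φ.1) (AT.sval a) : D4) : E4) = ((φ.1 a : S3) : E4)
    rw [AT.coneFun_boundary]
    rfl
  · refine ⟨⟨⟨AT.hMap V hV, AT.continuous_hMap hV⟩, ?_, ?_⟩⟩
    · intro Ψ
      apply Subtype.ext
      apply Homeomorph.ext
      intro x
      show AT.aFun 0 (AT.toCD Ψ.1) x = AT.coneFun (AT.toCS (HomeoRestriction.restrictHomeo Ψ.1 Ψ.2.2)) x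
      exact AT.aFun_zero_eq Ψ.1 Ψ.2.2 x
    · intro Ψ
      apply Subtype.ext
      apply Homeomorph.ext
      intro x
      exact AT.aFun_one (AT.toCD Ψ.1) x

end
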